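/- Assume the standard scarred-sequence setting and suppose additionally given: for each N and each i ∈ I_N, a self-adjoint linear operator h_{N,i} on the M_N-qudit space supported on X_{N,i} with operator norm ‖h_{N,i}‖ ≤ C_h (C_h a constant independent of N and i); a depth D ∈ ℕ independent of N; and for each N, subsets L_{N,1}, …, L_{N,D} ⊆ I_N such that within each layer ℓ the supports X_{N,i} for i ∈ L_{N,ℓ} are pairwise disjoint. Define the circuit unitary U_N = exp(√−1 · H_N^{(D)}) ∘ ⋯ ∘ exp(√−1 · H_N^{(1)}), where H_N^{(ℓ)} = Σ_{i∈L_{N,ℓ}} P_{N,i} ∘ h_{N,i} ∘ P_{N,i}. Then ‖U_N A_N − A_N‖ → 0 as N → ∞. -/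

import Mathlib

open Filter
open scoped BigOperators

noncomputable section

/-- The `M`-qudit space: complex functions on configurations `Fin M → Fin d`,
with the standard (Euclidean) inner product. -/
abbrev QuditSpace (d M : ℕ) : Type := EuclideanSpace ℂ (Fin M → Fin d)

/-- The computational basis vector indexed by the configuration `s`. -/
def basisVec {d M : ℕ} (s : Fin M → Fin d) : QuditSpace d M :=
  EuclideanSpace.single s 1

/-- The matrix element `⟨e_s, T e_t⟩` of an operator `T` on the qudit space. -/
def matElem {d M : ℕ} (T : QuditSpace d M →L[ℂ] QuditSpace d M)
    (s t : Fin M → Fin d) : ℂ :=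
  inner ℂ (basisVec s) (T (basisVec t))

/-- `T` is supported on the set of sites `X`: its matrix elements vanish whenever the two
configurations differ at a site outside `X`, and (among configuration pairs agreeing
outside `X`) they depend only on the restrictions of the configurations to `X`. -/
def SupportedOn {d M : ℕ} (X : Finset (Fin M))
    (T : QuditSpace d M →L[ℂ] QuditSpace d M) : Prop :=
  (∀ s t : Fin M → Fin d, (∃ j ∉ X, s j ≠ t j) → matElem T s t = 0) ∧
  (∀ s t s' t' : Fin M → Fin d,
      (∀ j ∈ X, s j = s' j) → (∀ j ∈ X, t j = t' j) →
      (∀ j ∉ X, s j = t j) → (∀ j ∉ X, s' j = t' j) →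
      matElem T s t = matElem T s' t')

/-- An orthogonal projection: a self-adjoint idempotent operator. -/
def IsOrthProj {d M : ℕ} (P : QuditSpace d M →L[ℂ] QuditSpace d M) : Prop :=
  (∀ v w : QuditSpace d M, (inner ℂ (P v) w : ℂ) = inner ℂ v (P w)) ∧ P ∘L P = P


section HilbertAux

variable {E : Type*} [NormedAddCommGroup E] [InnerProductSpace ℂ E] [CompleteSpace E]

local notation "⟪" x ", " y "⟫" => @inner ℂ _ _ x y

lemma sa_of_symm {T : E →L[ℂ] E} (hs : ∀ v w : E, ⟪T v, w⟫ = ⟪v, T w⟫) :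
    IsSelfAdjoint T :=
  LinearMap.IsSymmetric.isSelfAdjoint (fun v w => hs v w)

lemma symm_of_sa {T : E →L[ℂ] E} (hT : IsSelfAdjoint T) (v w : E) :
    ⟪T v, w⟫ = ⟪v, T w⟫ :=
  (ContinuousLinearMap.isSelfAdjoint_iff_isSymmetric.mp hT) v w

lemma proj_norm_sq {Z : E →L[ℂ] E} (hsa : IsSelfAdjoint Z) (hid : Z * Z = Z) (v : E) :
    ‖Z v‖ ^ 2 = RCLike.re ⟪v, Z v⟫ := by
  have h1 : Z (Z v) = Z v := by
    conv_lhs => rw [← ContinuousLinearMap.mul_apply, hid]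
  have h2 : ⟪Z v, Z v⟫ = ⟪v, Z v⟫ := by
    rw [symm_of_sa hsa v (Z v), h1]
  rw [← inner_self_eq_norm_sq (𝕜 := ℂ), h2]

lemma proj_contraction {Z : E →L[ℂ] E} (hsa : IsSelfAdjoint Z) (hid : Z * Z = Z) (v : E) :
    ‖Z v‖ ≤ ‖v‖ := by
  rcases eq_or_lt_of_le (norm_nonneg (Z v)) with h0 | h0
  · rw [← h0]; exact norm_nonneg v
  · have h1 : ‖Z v‖ ^ 2 ≤ ‖v‖ * ‖Z v‖ := by
      rw [proj_norm_sq hsa hid v]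
      exact re_inner_le_norm _ _
    nlinarith

lemma exp_fix {B : E →L[ℂ] E} {w : E} (hw : B w = 0) : NormedSpace.exp B w = w := by
  have hs : Summable fun n : ℕ => ((Nat.factorial n : ℂ))⁻¹ • B ^ n := NormedSpace.expSeries_summable' (𝕂 := ℂ) B
  have h1 : NormedSpace.exp B w = ∑' n : ℕ, (((Nat.factorial n : ℂ))⁻¹ • B ^ n) w := by
    rw [NormedSpace.exp_eq_tsum ℂ]
    simpa using (ContinuousLinearMap.apply ℂ E w).map_tsum hs
  rw [h1, tsum_eq_single 0]
  · simp
  · intro n hn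
    obtain ⟨m, rfl⟩ := Nat.exists_eq_succ_of_ne_zero hn
    rw [pow_succ]
    simp [ContinuousLinearMap.mul_apply, hw]

lemma exp_I_smul_isometry {H : E →L[ℂ] E} (hsa : IsSelfAdjoint H) (v : E) :
    ‖NormedSpace.exp (Complex.I • H) v‖ = ‖v‖ := by
  have hskew : Complex.I • H ∈ skewAdjoint (E →L[ℂ] E) := by
    rw [skewAdjoint.mem_iff, star_smul, hsa.star_eq]
    simp [Complex.star_def, Complex.conj_I, neg_smul]
  letI : NormedAlgebra ℚ (E →L[ℂ] E) := NormedAlgebra.restrictScalars ℚ ℂ (E →L[ℂ] E)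
  have hU := NormedSpace.exp_mem_unitary_of_mem_skewAdjoint hskew
  set U := NormedSpace.exp (Complex.I • H) with hUdef
  have h1 : star U * U = 1 := (Unitary.mem_iff.mp hU).1
  have h2 : ⟪U v, U v⟫ = ⟪v, v⟫ := by
    calc ⟪U v, U v⟫ = ⟪(ContinuousLinearMap.adjoint U) (U v), v⟫ :=
          (ContinuousLinearMap.adjoint_inner_left U v (U v)).symm
    _ = ⟪(star U * U) v, v⟫ := by
          rw [ContinuousLinearMap.star_eq_adjoint, ContinuousLinearMap.mul_apply]
    _ = ⟪v, v⟫ := by rw [h1, ContinuousLinearMap.one_apply]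
  rw [norm_eq_sqrt_re_inner (𝕜 := ℂ), norm_eq_sqrt_re_inner (𝕜 := ℂ) v, h2]

lemma Zprod_props : ∀ (l : List (E →L[ℂ] E)),
    (∀ T ∈ l, IsSelfAdjoint T ∧ T * T = T) → l.Pairwise Commute →
    IsSelfAdjoint ((l.map fun T => 1 - T).prod)
    ∧ ((l.map fun T => 1 - T).prod) * ((l.map fun T => 1 - T).prod)
        = ((l.map fun T => 1 - T).prod)
    ∧ (∀ T ∈ l, T * ((l.map fun T => 1 - T).prod) = 0)
    ∧ ∀ v : E, RCLike.re ⟪v, ((1 : E →L[ℂ] E) - (l.map fun T => 1 - T).prod) v⟫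
        ≤ (l.map fun T => ‖T v‖ ^ 2).sum := by
  intro l
  induction l with
  | nil =>
    intro _ _
    refine ⟨by simpa using (IsSelfAdjoint.one (R := E →L[ℂ] E)), by simp, by simp, fun v => by simp⟩
  | cons T t ih =>
    intro hmem hpair
    rw [List.pairwise_cons] at hpair
    obtain ⟨hcommmem, hpair'⟩ := hpair
    obtain ⟨ihsa, ihid, ihzero, ihineq⟩ :=
      ih (fun S hS => hmem S (List.mem_cons_of_mem _ hS)) hpair'
    obtain ⟨hT, hTT⟩ := hmem T List.mem_cons_self
    set Zt := (t.map fun S => (1 : E →L[ℂ] E) - S).prod with hZtdef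
    have hprod : ((T :: t).map fun S => (1 : E →L[ℂ] E) - S).prod = (1 - T) * Zt := by
      rw [List.map_cons, List.prod_cons]
    have h1sa : IsSelfAdjoint ((1 : E →L[ℂ] E) - T) := (IsSelfAdjoint.one _).sub hT
    have hcommZ : Commute T Zt := by
      apply Commute.list_prod_right
      intro S hS
      obtain ⟨S', hS', rfl⟩ := List.mem_map.mp hS
      exact (Commute.one_right T).sub_right (hcommmem S' hS')
    have hcomm1Z : Commute ((1 : E →L[ℂ] E) - T) Zt := (Commute.one_left Zt).sub_left hcommZ
    have hT0 : T * (1 - T) = 0 := by rw [mul_sub, mul_one, hTT, sub_self]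
    have h1T : ((1 : E →L[ℂ] E) - T) * (1 - T) = 1 - T := by
      rw [sub_mul, one_mul, hT0, sub_zero]
    have hsaZ : IsSelfAdjoint ((1 - T) * Zt) := by
      rw [IsSelfAdjoint, star_mul, ihsa.star_eq, h1sa.star_eq]
      exact hcomm1Z.eq.symm
    have hidZ : ((1 - T) * Zt) * ((1 - T) * Zt) = (1 - T) * Zt := by
      have hmid : Zt * ((1 - T) * Zt) = (1 - T) * (Zt * Zt) := by
        rw [← mul_assoc, ← hcomm1Z.eq, mul_assoc]
      rw [mul_assoc, hmid, ihid, ← mul_assoc, h1T]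
    have hzeroZ : ∀ S ∈ T :: t, S * ((1 - T) * Zt) = 0 := by
      intro S hS
      rcases List.mem_cons.mp hS with rfl | hS'
      · rw [← mul_assoc, hT0, zero_mul]
      · have hcS : Commute S ((1 : E →L[ℂ] E) - T) :=
          (Commute.one_right S).sub_right (hcommmem S hS').symm
        rw [← mul_assoc, hcS.eq, mul_assoc, ihzero S hS', mul_zero]
    have hineq : ∀ v : E,
        RCLike.re ⟪v, ((1 : E →L[ℂ] E) - (1 - T) * Zt) v⟫
          ≤ ((T :: t).map fun S => ‖S v‖ ^ 2).sum := by
      intro v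
      have hsplit : (1 : E →L[ℂ] E) - (1 - T) * Zt = (1 - Zt) + T * Zt := by
        rw [sub_mul, one_mul]; abel
      have hTZ : T * Zt = T * (Zt * T) := by
        conv_lhs => rw [← hTT, mul_assoc, hcommZ.eq]
      have happ : ((T * Zt) v : E) = T (Zt (T v)) := by
        rw [hTZ]; simp [ContinuousLinearMap.mul_apply]
      have h2 : RCLike.re ⟪v, (T * Zt) v⟫ ≤ ‖T v‖ ^ 2 := by
        rw [happ, ← symm_of_sa hT v (Zt (T v))]
        calc RCLike.re ⟪T v, Zt (T v)⟫ ≤ ‖T v‖ * ‖Zt (T v)‖ := re_inner_le_norm _ _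
        _ ≤ ‖T v‖ * ‖T v‖ :=
            mul_le_mul_of_nonneg_left (proj_contraction ihsa ihid (T v)) (norm_nonneg _)
        _ = ‖T v‖ ^ 2 := by ring
      calc RCLike.re ⟪v, ((1 : E →L[ℂ] E) - (1 - T) * Zt) v⟫
          = RCLike.re ⟪v, ((1 : E →L[ℂ] E) - Zt) v⟫ + RCLike.re ⟪v, (T * Zt) v⟫ := by
            rw [hsplit, ContinuousLinearMap.add_apply, inner_add_right, map_add]
      _ ≤ (t.map fun S => ‖S v‖ ^ 2).sum + ‖T v‖ ^ 2 := add_le_add (ihineq v) h2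
      _ = ((T :: t).map fun S => ‖S v‖ ^ 2).sum := by
            rw [List.map_cons, List.sum_cons]; ring
    rw [hprod]
    exact ⟨hsaZ, hidZ, hzeroZ, hineq⟩

lemma layer_sa {ι : Type*} (Lset : Finset ι) (P h : ι → E →L[ℂ] E)
    (hP : ∀ i, ∀ v w : E, ⟪P i v, w⟫ = ⟪v, P i w⟫)
    (hh : ∀ i, ∀ v w : E, ⟪h i v, w⟫ = ⟪v, h i w⟫) :
    IsSelfAdjoint (∑ i ∈ Lset, P i ∘L h i ∘L P i) := by
  apply sa_of_symm
  intro v w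
  rw [ContinuousLinearMap.sum_apply, ContinuousLinearMap.sum_apply, sum_inner, inner_sum]
  refine Finset.sum_congr rfl fun i _ => ?_
  simp only [ContinuousLinearMap.comp_apply]
  rw [hP i (h i (P i v)) w, hh i (P i v) (P i w), hP i v (h i (P i w))]

lemma prod_isometry : ∀ (l : List (E →L[ℂ] E)),
    (∀ f ∈ l, ∀ v : E, ‖f v‖ = ‖v‖) → ∀ v : E, ‖l.prod v‖ = ‖v‖ := by
  intro l
  induction l with
  | nil => intro _ v; simp
  | cons f t ih =>
    intro hm v
    rw [List.prod_cons, ContinuousLinearMap.mul_apply,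
      hm f List.mem_cons_self _, ih (fun g hg v => hm g (List.mem_cons_of_mem _ hg) v) v]

lemma telescope : ∀ (l : List (E →L[ℂ] E)),
    (∀ f ∈ l, ∀ v : E, ‖f v‖ = ‖v‖) → ∀ A : E,
    ‖l.reverse.prod A - A‖ ≤ (l.map fun f => ‖f A - A‖).sum := by
  intro l
  induction l with
  | nil => intro _ A; simp
  | cons f t ih =>
    intro hm A
    have hiso : ∀ g ∈ t.reverse, ∀ v : E, ‖g v‖ = ‖v‖ :=
      fun g hg v => hm g (List.mem_cons_of_mem f (List.mem_reverse.mp hg)) v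
    have h2 : ‖t.reverse.prod (f A) - t.reverse.prod A‖ = ‖f A - A‖ := by
      rw [← map_sub]
      exact prod_isometry t.reverse hiso _
    calc ‖(f :: t).reverse.prod A - A‖
        = ‖t.reverse.prod (f A) - A‖ := by
          rw [List.reverse_cons, List.prod_append, List.prod_cons, List.prod_nil, mul_one,
            ContinuousLinearMap.mul_apply]
    _ ≤ ‖t.reverse.prod (f A) - t.reverse.prod A‖ + ‖t.reverse.prod A - A‖ := by
          have := norm_add_le (t.reverse.prod (f A) - t.reverse.prod A)
            (t.reverse.prod A - A)
          simpa [sub_add_sub_cancel] using this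
    _ ≤ ‖f A - A‖ + (t.map fun g => ‖g A - A‖).sum := by
          rw [h2]
          exact add_le_add_right (ih (fun g hg v => hm g (List.mem_cons_of_mem _ hg) v) A) _
    _ = ((f :: t).map fun g => ‖g A - A‖).sum := by rw [List.map_cons, List.sum_cons]

end HilbertAux
section QuditAux

variable {d M : ℕ}

lemma matElem_eq (T : QuditSpace d M →L[ℂ] QuditSpace d M) (s t : Fin M → Fin d) :
    matElem T s t = T (basisVec t) s := by
  simp [matElem, basisVec, EuclideanSpace.inner_single_left]

lemma euclid_decompose (v : QuditSpace d M) : ∑ u, v u • basisVec u = v := by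
  have h := (EuclideanSpace.basisFun (Fin M → Fin d) ℂ).sum_repr v
  simpa [EuclideanSpace.basisFun_apply, EuclideanSpace.basisFun_repr, basisVec] using h

lemma matElem_ext {T S : QuditSpace d M →L[ℂ] QuditSpace d M}
    (H : ∀ s t, matElem T s t = matElem S s t) : T = S := by
  have hbasis : ∀ t, T (basisVec t) = S (basisVec t) := by
    intro t
    have h1 : ∀ s, T (basisVec t) s = S (basisVec t) s := by
      intro s
      rw [← matElem_eq, ← matElem_eq, H]
    ext s
    exact h1 s
  apply ContinuousLinearMap.ext
  intro v
  conv_lhs => rw [← euclid_decompose v]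
  conv_rhs => rw [← euclid_decompose v]
  rw [map_sum, map_sum]
  refine Finset.sum_congr rfl fun u _ => ?_
  rw [map_smul, map_smul, hbasis u]

lemma matElem_comp (T S : QuditSpace d M →L[ℂ] QuditSpace d M) (s t : Fin M → Fin d) :
    matElem (T ∘L S) s t = ∑ u, matElem T s u * matElem S u t := by
  unfold matElem
  conv_lhs => rw [ContinuousLinearMap.comp_apply, ← euclid_decompose (S (basisVec t))]
  rw [map_sum, inner_sum]
  refine Finset.sum_congr rfl fun u _ => ?_
  rw [map_smul, inner_smul_right]
  rw [show (S (basisVec t)) u = matElem S u t from (matElem_eq S u t).symm]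
  unfold matElem
  ring

lemma supportedOn_comm {X Y : Finset (Fin M)} (hXY : Disjoint X Y)
    {T S : QuditSpace d M →L[ℂ] QuditSpace d M}
    (hT : SupportedOn X T) (hS : SupportedOn Y S) : T ∘L S = S ∘L T := by
  apply matElem_ext
  intro s t
  rw [matElem_comp, matElem_comp]
  by_cases hst : ∀ j, j ∉ X → j ∉ Y → s j = t j
  · have hXnY : ∀ j, j ∈ X → j ∉ Y := fun j hj => Finset.disjoint_left.mp hXY hj
    have hYnX : ∀ j, j ∈ Y → j ∉ X := fun j hj => Finset.disjoint_right.mp hXY hj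
    classical
    set u₁ : Fin M → Fin d := fun j => if j ∈ X then t j else s j with hu₁
    set u₂ : Fin M → Fin d := fun j => if j ∈ Y then t j else s j with hu₂
    have hz₁ : ∀ u ∈ Finset.univ, u ≠ u₁ → matElem T s u * matElem S u t = 0 := by
      intro u _ hne
      by_cases h1 : ∀ k, k ∉ X → s k = u k
      · by_cases h2 : ∀ k, k ∉ Y → u k = t k
        · exfalso
          apply hne
          funext k
          by_cases hk : k ∈ X
          · rw [hu₁]; simp only [hk, if_pos]
            exact h2 k (hXnY k hk)
          · rw [hu₁]; simp only [hk, if_neg, if_false]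
            exact (h1 k hk).symm
        · push_neg at h2
          obtain ⟨k, hk, hk2⟩ := h2
          rw [hS.1 u t ⟨k, hk, hk2⟩, mul_zero]
      · push_neg at h1
        obtain ⟨k, hk, hk2⟩ := h1
        rw [hT.1 s u ⟨k, hk, hk2⟩, zero_mul]
    have hz₂ : ∀ u ∈ Finset.univ, u ≠ u₂ → matElem S s u * matElem T u t = 0 := by
      intro u _ hne
      by_cases h1 : ∀ k, k ∉ Y → s k = u k
      · by_cases h2 : ∀ k, k ∉ X → u k = t k
        · exfalso
          apply hne
          funext k
          by_cases hk : k ∈ Y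
          · rw [hu₂]; simp only [hk, if_pos]
            exact h2 k (hYnX k hk)
          · rw [hu₂]; simp only [hk, if_neg, if_false]
            exact (h1 k hk).symm
        · push_neg at h2
          obtain ⟨k, hk, hk2⟩ := h2
          rw [hT.1 u t ⟨k, hk, hk2⟩, mul_zero]
      · push_neg at h1
        obtain ⟨k, hk, hk2⟩ := h1
        rw [hS.1 s u ⟨k, hk, hk2⟩, zero_mul]
    rw [Finset.sum_eq_single u₁ hz₁ (fun h => absurd (Finset.mem_univ _) h),
        Finset.sum_eq_single u₂ hz₂ (fun h => absurd (Finset.mem_univ _) h)]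
    have e1 : matElem T s u₁ = matElem T u₂ t := by
      apply hT.2
      · intro j hj
        rw [hu₂]; simp only [hXnY j hj, if_neg, if_false]
      · intro j hj
        rw [hu₁]; simp only [hj, if_pos]
      · intro j hj
        rw [hu₁]; simp only [hj, if_neg, if_false]
      · intro j hj
        by_cases hjY : j ∈ Y
        · rw [hu₂]; simp only [hjY, if_pos]
        · rw [hu₂]; simp only [hjY, if_neg, if_false]
          exact hst j hj hjY
    have e2 : matElem S u₁ t = matElem S s u₂ := by
      apply hS.2
      · intro j hj
        rw [hu₁]; simp only [hYnX j hj, if_neg, if_false]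
      · intro j hj
        rw [hu₂]; simp only [hj, if_pos]
      · intro j hj
        by_cases hjX : j ∈ X
        · rw [hu₁]; simp only [hjX, if_pos]
        · rw [hu₁]; simp only [hjX, if_neg, if_false]
          exact hst j hjX hj
      · intro j hj
        rw [hu₂]; simp only [hj, if_neg, if_false]
    rw [e1, e2]
    ring
  · push_neg at hst
    obtain ⟨j, hjX, hjY, hjne⟩ := hst
    rw [Finset.sum_eq_zero, Finset.sum_eq_zero]
    · intro u _
      by_cases h1 : ∀ k, k ∉ Y → s k = u k
      · have h2 : matElem T u t = 0 := by
          apply hT.1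
          exact ⟨j, hjX, by rw [← h1 j hjY]; exact hjne⟩
        rw [h2, mul_zero]
      · push_neg at h1
        obtain ⟨k, hk, hk2⟩ := h1
        rw [hS.1 s u ⟨k, hk, hk2⟩, zero_mul]
    · intro u _
      by_cases h1 : ∀ k, k ∉ X → s k = u k
      · have h2 : matElem S u t = 0 := by
          apply hS.1
          exact ⟨j, hjY, by rw [← h1 j hjX]; exact hjne⟩
        rw [h2, mul_zero]
      · push_neg at h1
        obtain ⟨k, hk, hk2⟩ := h1
        rw [hT.1 s u ⟨k, hk, hk2⟩, zero_mul]

end QuditAux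
section LayerAux

variable {d M : ℕ}

lemma layer_bound {ι : Type} [DecidableEq ι]
    (Lset : Finset ι) (X : ι → Finset (Fin M))
    (P h : ι → QuditSpace d M →L[ℂ] QuditSpace d M)
    (hproj : ∀ i, IsOrthProj (P i))
    (hsupp : ∀ i, SupportedOn (X i) (P i))
    (hhsa : ∀ i, ∀ v w : QuditSpace d M, (inner ℂ (h i v) w : ℂ) = inner ℂ v (h i w))
    (hdisj : ∀ i ∈ Lset, ∀ i' ∈ Lset, i ≠ i' → Disjoint (X i) (X i'))
    (A : QuditSpace d M) :
    ‖NormedSpace.exp (Complex.I • ∑ i ∈ Lset, P i ∘L h i ∘L P i) A - A‖ ≤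
      2 * Real.sqrt (∑ i ∈ Lset, ‖P i A‖ ^ 2) := by
  classical
  set H := ∑ i ∈ Lset, P i ∘L h i ∘L P i with hHdef
  have hHsa : IsSelfAdjoint H := layer_sa Lset P h (fun i => (hproj i).1) hhsa
  set l := Lset.toList with hldef
  have hlmem : ∀ i ∈ l, i ∈ Lset := fun i hi => Finset.mem_toList.mp hi
  have hmemprops : ∀ Top ∈ l.map P, IsSelfAdjoint Top ∧ Top * Top = Top := by
    intro Top hTop
    obtain ⟨i, hi, rfl⟩ := List.mem_map.mp hTop
    refine ⟨sa_of_symm (hproj i).1, ?_⟩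
    rw [ContinuousLinearMap.mul_def]
    exact (hproj i).2
  have hpairs : (l.map P).Pairwise Commute := by
    refine List.pairwise_map.mpr ?_
    refine List.Pairwise.imp_of_mem ?_ (Finset.nodup_toList Lset)
    intro a b ha hb hne
    have hdis := hdisj a (hlmem a ha) b (hlmem b hb) hne
    have hcm := supportedOn_comm hdis (hsupp a) (hsupp b)
    show P a * P b = P b * P a
    rw [ContinuousLinearMap.mul_def, ContinuousLinearMap.mul_def, hcm]
  obtain ⟨hZsa, hZid, hZzero, hZineq⟩ := Zprod_props (l.map P) hmemprops hpairs
  set Z := ((l.map P).map fun T => 1 - T).prod with hZdef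
  have hHZ : H * Z = 0 := by
    rw [hHdef, Finset.sum_mul]
    apply Finset.sum_eq_zero
    intro i hi
    have hPZ : P i * Z = 0 :=
      hZzero (P i) (List.mem_map.mpr ⟨i, Finset.mem_toList.mpr hi, rfl⟩)
    have hrw : P i ∘L h i ∘L P i = P i * h i * P i := rfl
    rw [hrw, mul_assoc (P i * h i) (P i) Z, hPZ, mul_zero]
  have hfix : ∀ v : QuditSpace d M, NormedSpace.exp (Complex.I • H) (Z v) = Z v := by
    intro v
    apply exp_fix
    have hZv : H (Z v) = 0 := by
      rw [show H (Z v) = (H * Z) v from rfl, hHZ]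
      rfl
    rw [ContinuousLinearMap.smul_apply, hZv, smul_zero]
  set V := NormedSpace.exp (Complex.I • H) with hVdef
  have hsplit : V A - A = V (((1 : QuditSpace d M →L[ℂ] QuditSpace d M) - Z) A)
      - ((1 : QuditSpace d M →L[ℂ] QuditSpace d M) - Z) A := by
    have h1 : ((1 : QuditSpace d M →L[ℂ] QuditSpace d M) - Z) A = A - Z A := by
      simp [ContinuousLinearMap.sub_apply]
    rw [h1]
    have h2 : Z A + (A - Z A) = A := by abel
    conv_lhs => rw [← h2]
    rw [map_add, hfix A]
    abel
  have hQsa : IsSelfAdjoint ((1 : QuditSpace d M →L[ℂ] QuditSpace d M) - Z) :=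
    (IsSelfAdjoint.one _).sub hZsa
  have hQid : ((1 : QuditSpace d M →L[ℂ] QuditSpace d M) - Z) * (1 - Z) = 1 - Z := by
    have hZ0 : ((1 : QuditSpace d M →L[ℂ] QuditSpace d M) - Z) * Z = 0 := by
      rw [sub_mul, one_mul, hZid, sub_self]
    rw [mul_sub, mul_one, hZ0, sub_zero]
  have hnorm2 : ‖((1 : QuditSpace d M →L[ℂ] QuditSpace d M) - Z) A‖ ^ 2
      ≤ ∑ i ∈ Lset, ‖P i A‖ ^ 2 := by
    rw [proj_norm_sq hQsa hQid A]
    have hineq := hZineq A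
    have hsum : ((l.map P).map fun T => ‖T A‖ ^ 2).sum = ∑ i ∈ Lset, ‖P i A‖ ^ 2 := by
      rw [List.map_map, hldef]
      exact Finset.sum_map_toList Lset (fun i => ‖P i A‖ ^ 2)
    rw [← hsum]
    exact hineq
  have hnorm : ‖((1 : QuditSpace d M →L[ℂ] QuditSpace d M) - Z) A‖
      ≤ Real.sqrt (∑ i ∈ Lset, ‖P i A‖ ^ 2) := by
    rw [← Real.sqrt_sq (norm_nonneg (((1 : QuditSpace d M →L[ℂ] QuditSpace d M) - Z) A))]
    exact Real.sqrt_le_sqrt hnorm2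
  rw [hsplit]
  calc ‖V (((1 : QuditSpace d M →L[ℂ] QuditSpace d M) - Z) A) - (1 - Z) A‖
      ≤ ‖V (((1 : QuditSpace d M →L[ℂ] QuditSpace d M) - Z) A)‖ + ‖((1 : QuditSpace d M →L[ℂ] QuditSpace d M) - Z) A‖ :=
        norm_sub_le _ _
  _ = 2 * ‖((1 : QuditSpace d M →L[ℂ] QuditSpace d M) - Z) A‖ := by
        rw [hVdef, exp_I_smul_isometry hHsa]; ring
  _ ≤ 2 * Real.sqrt (∑ i ∈ Lset, ‖P i A‖ ^ 2) := by linarith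

end LayerAux

/-- **Proposition 2 of the paper** (standard scarred-sequence setting): `A_N` is an asymptotic
fixed point of any finite-depth circuit `U_N = exp(i H_N^{(D)}) ∘ ⋯ ∘ exp(i H_N^{(1)})` whose
layer Hamiltonians `H_N^{(ℓ)} = ∑_{i ∈ L_{N,ℓ}} P_{N,i} ∘ h_{N,i} ∘ P_{N,i}` are built from
uniformly bounded self-adjoint local generators, with pairwise disjoint supports within each
layer. -/
theorem circuit_asymptotically_fixes
    (d K C : ℕ) (hd : 2 ≤ d)
    (M : ℕ → ℕ) (I : ℕ → Type) [∀ N, Fintype (I N)] [∀ N, DecidableEq (I N)]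
    (X : ∀ N, I N → Finset (Fin (M N)))
    (P : ∀ N, (i : I N) → QuditSpace d (M N) →L[ℂ] QuditSpace d (M N))
    (A : ∀ N, QuditSpace d (M N))
    (hK : ∀ N (i : I N), (X N i).card ≤ K)
    (hC : ∀ N (i : I N),
      (Finset.univ.filter fun i' : I N => i' ≠ i ∧ (X N i ∩ X N i').Nonempty).card ≤ C)
    (hproj : ∀ N (i : I N), IsOrthProj (P N i))
    (hsupp : ∀ N (i : I N), SupportedOn (X N i) (P N i))
    (hA : ∀ N, ‖A N‖ = 1)
    (hlim : Tendsto (fun N => ‖(∑ i : I N, P N i) (A N)‖) atTop (nhds 0))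
    (Ch : ℝ) (hCh : 0 ≤ Ch)
    (h : ∀ N, (i : I N) → QuditSpace d (M N) →L[ℂ] QuditSpace d (M N))
    (hhsa : ∀ N (i : I N), ∀ v w : QuditSpace d (M N),
      (inner ℂ ((h N i) v) w : ℂ) = inner ℂ v ((h N i) w))
    (hhsupp : ∀ N (i : I N), SupportedOn (X N i) (h N i))
    (hhnorm : ∀ N (i : I N), ‖h N i‖ ≤ Ch)
    (D : ℕ) (L : ∀ N, Fin D → Finset (I N))
    (hLdisj : ∀ N (ℓ : Fin D), ∀ i ∈ L N ℓ, ∀ i' ∈ L N ℓ, i ≠ i' → Disjoint (X N i) (X N i'))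
 :
    Tendsto (fun N =>
        ‖(((List.ofFn fun ℓ : Fin D =>
          NormedSpace.exp (Complex.I •
            (∑ i ∈ L N ℓ, (P N i) ∘L (h N i) ∘L (P N i)))).reverse).prod) (A N) - A N‖)
      atTop (nhds 0) := by
  have key : ∀ N,
      ‖(((List.ofFn fun ℓ : Fin D =>
          NormedSpace.exp (Complex.I •
            (∑ i ∈ L N ℓ, (P N i) ∘L (h N i) ∘L (P N i)))).reverse).prod) (A N) - A N‖
        ≤ 2 * D * Real.sqrt ‖(∑ i : I N, P N i) (A N)‖ := by
    intro N
    set lst := List.ofFn fun ℓ : Fin D =>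
      NormedSpace.exp (Complex.I • (∑ i ∈ L N ℓ, (P N i) ∘L (h N i) ∘L (P N i))) with hlst
    have hsa : ∀ ℓ : Fin D,
        IsSelfAdjoint (∑ i ∈ L N ℓ, (P N i) ∘L (h N i) ∘L (P N i)) :=
      fun ℓ => layer_sa (L N ℓ) (P N) (h N) (fun i => (hproj N i).1) (hhsa N)
    have hisol : ∀ f ∈ lst, ∀ v : QuditSpace d (M N), ‖f v‖ = ‖v‖ := by
      intro f hf v
      obtain ⟨ℓ, hℓ⟩ := List.mem_ofFn.mp hf
      rw [← hℓ]
      exact exp_I_smul_isometry (hsa ℓ) v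
    have h1 := telescope lst hisol (A N)
    have h2 : (lst.map fun f => ‖f (A N) - A N‖).sum
        = ∑ ℓ : Fin D, ‖NormedSpace.exp (Complex.I •
            (∑ i ∈ L N ℓ, (P N i) ∘L (h N i) ∘L (P N i))) (A N) - A N‖ := by
      rw [hlst, List.map_ofFn, List.sum_ofFn]
      rfl
    have h3 : ∀ ℓ : Fin D, ‖NormedSpace.exp (Complex.I •
          (∑ i ∈ L N ℓ, (P N i) ∘L (h N i) ∘L (P N i))) (A N) - A N‖
        ≤ 2 * Real.sqrt ‖(∑ i : I N, P N i) (A N)‖ := by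
      intro ℓ
      refine le_trans (layer_bound (L N ℓ) (X N) (P N) (h N) (hproj N) (hsupp N) (hhsa N)
        (fun i hi i' hi' hne => hLdisj N ℓ i hi i' hi' hne) (A N)) ?_
      have hmono : (∑ i ∈ L N ℓ, ‖P N i (A N)‖ ^ 2) ≤ ‖(∑ i : I N, P N i) (A N)‖ := by
        calc ∑ i ∈ L N ℓ, ‖P N i (A N)‖ ^ 2 ≤ ∑ i : I N, ‖P N i (A N)‖ ^ 2 :=
              Finset.sum_le_sum_of_subset_of_nonneg (Finset.subset_univ _)
                (fun i _ _ => sq_nonneg _)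
        _ = RCLike.re (inner ℂ (A N) ((∑ i : I N, P N i) (A N)) : ℂ) := by
              rw [ContinuousLinearMap.sum_apply, inner_sum, map_sum]
              refine Finset.sum_congr rfl fun i _ => ?_
              exact proj_norm_sq (sa_of_symm (hproj N i).1)
                (by rw [ContinuousLinearMap.mul_def]; exact (hproj N i).2) (A N)
        _ ≤ ‖A N‖ * ‖(∑ i : I N, P N i) (A N)‖ := re_inner_le_norm _ _
        _ = ‖(∑ i : I N, P N i) (A N)‖ := by rw [hA N, one_mul]
      have hs := Real.sqrt_le_sqrt hmono
      linarith
    calc ‖lst.reverse.prod (A N) - A N‖ ≤ (lst.map fun f => ‖f (A N) - A N‖).sum := h1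
    _ = ∑ ℓ : Fin D, ‖NormedSpace.exp (Complex.I •
          (∑ i ∈ L N ℓ, (P N i) ∘L (h N i) ∘L (P N i))) (A N) - A N‖ := h2
    _ ≤ ∑ _ℓ : Fin D, 2 * Real.sqrt ‖(∑ i : I N, P N i) (A N)‖ :=
          Finset.sum_le_sum fun ℓ _ => h3 ℓ
    _ = 2 * D * Real.sqrt ‖(∑ i : I N, P N i) (A N)‖ := by
          rw [Finset.sum_const, Finset.card_univ, Fintype.card_fin, nsmul_eq_mul]
          ring
  have hlim2 : Tendsto (fun N => 2 * (D : ℝ) * Real.sqrt ‖(∑ i : I N, P N i) (A N)‖)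
      atTop (nhds 0) := by
    have h0 : Tendsto (fun N => Real.sqrt ‖(∑ i : I N, P N i) (A N)‖) atTop (nhds 0) := by
      have := hlim.sqrt
      rwa [Real.sqrt_zero] at this
    have := h0.const_mul (2 * (D : ℝ))
    simpa using this
  exact squeeze_zero (fun N => norm_nonneg _) key hlim2
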